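/- If (x,y) ∈ [0,1]^2 with x = [0; a_1, a_2, …] irrational and y = [0; b_1, b_2, …], then for n ≥ a_1, writing n = a_1 + ⋯ + a_{j_n} + λ_n with 0 ≤ λ_n < a_{j_n+1}, the n-th iterate of the Farey natural extension satisfies ℱ^n(x,y) = ([0; a_{j_n+1} - λ_n, a_{j_n+2}, …], [0; λ_n + 1, a_{j_n}, …, a_2, a_1 - 1 + b_1, b_2, …]), and for 0 ≤ n < a_1, ℱ^n(x,y) = ([0; a_1 - n, a_2, …], [0; n + b_1, b_2, …]). -/

import Mathlib

noncomputable section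

/-- Ito's natural extension map of the Farey tent map on `Ω = [0,1]²`. -/
def Fbar (p : ℝ × ℝ) : ℝ × ℝ :=
  if p.1 ≤ 1 / 2 then (p.1 / (1 - p.1), p.2 / (1 + p.2))
  else ((1 - p.1) / p.1, 1 / (1 + p.2))

/-- Evaluation of a finite continued fraction with digit list `l` and tail `t`:
`cfVal [d₁, …, d_m] t = [0; d₁, …, d_m + t] = 1/(d₁ + 1/(d₂ + ⋯ + 1/(d_m + t)))`. -/
def cfVal : List ℤ → ℝ → ℝ
  | [], u => u
  | d :: l, u => 1 / ((d : ℝ) + cfVal l u)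

lemma cfVal_mem (L : List ℤ) (hL : ∀ d ∈ L, 1 ≤ d) (u : ℝ) (hu0 : 0 ≤ u) (hu1 : u ≤ 1) :
    0 ≤ cfVal L u ∧ cfVal L u ≤ 1 := by
  induction L with
  | nil => exact ⟨hu0, hu1⟩
  | cons d l ih =>
    have hd : (1:ℝ) ≤ (d:ℝ) := by exact_mod_cast hL d (by simp)
    have ihl := ih (fun e he => hL e (by simp [he]))
    have hpos : (1:ℝ) ≤ (d:ℝ) + cfVal l u := by linarith [ihl.1]
    refine ⟨?_, ?_⟩
    · simp only [cfVal]
      exact le_of_lt (div_pos one_pos (by linarith))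
    · simp only [cfVal]
      rw [div_le_one (by linarith)]
      linarith

lemma stepA (c : ℤ) (s w : ℝ) (hc : 2 ≤ c) (hs0 : 0 < s) (hs1 : s < 1) (hw : 1 ≤ w) :
    Fbar (1/((c:ℝ)+s), 1/w) = (1/(((c:ℝ)-1)+s), 1/(w+1)) := by
  have hc2 : (2:ℝ) ≤ (c:ℝ) := by exact_mod_cast hc
  have h1 : (0:ℝ) < (c:ℝ)+s := by linarith
  have hle : 1/((c:ℝ)+s) ≤ 1/2 := by
    rw [div_le_div_iff₀ h1 two_pos]; linarith
  have hw0 : (0:ℝ) < w := by linarith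
  simp only [Fbar, if_pos hle]
  have hne1 : (c:ℝ)+s ≠ 0 := ne_of_gt h1
  have hne2 : ((c:ℝ)-1)+s ≠ 0 := ne_of_gt (by linarith)
  have hne3 : (1:ℝ) - 1/((c:ℝ)+s) ≠ 0 := by
    have : (1:ℝ) - 1/((c:ℝ)+s) = (((c:ℝ)-1)+s)/((c:ℝ)+s) := by field_simp; ring
    rw [this]
    exact ne_of_gt (div_pos (by linarith) h1)
  have e1 : (1/((c:ℝ)+s)) / (1 - 1/((c:ℝ)+s)) = 1/(((c:ℝ)-1)+s) := by
    field_simp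
    linear_combination mul_inv_cancel₀ hne2
  have e2 : (1/w) / (1 + 1/w) = 1/(w+1) := by
    have hnw : w ≠ 0 := ne_of_gt hw0
    have hnw1 : w + 1 ≠ 0 := by linarith
    field_simp
  simp only [e1, e2]

lemma stepB (s Y : ℝ) (hs0 : 0 < s) (hs1 : s < 1) :
    Fbar (1/(1+s), Y) = (s, 1/(1+Y)) := by
  have h1 : (0:ℝ) < 1+s := by linarith
  have hgt : ¬ (1/(1+s) ≤ 1/2) := by
    rw [not_le, div_lt_div_iff₀ two_pos h1]; linarith
  simp only [Fbar, if_neg hgt]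
  have e1 : (1 - 1/(1+s)) / (1/(1+s)) = s := by
    field_simp
    ring
  simp only [e1]

lemma within (p : ℝ × ℝ) (m : ℕ) (c : ℤ) (s w0 : ℝ) (hs0 : 0 < s) (hs1 : s < 1)
    (hw0 : 1 ≤ w0) (hbase : Fbar^[m] p = (1/((c:ℝ)+s), 1/w0)) :
    ∀ k : ℕ, (k:ℤ) < c → Fbar^[m+k] p = (1/(((c:ℝ)-k)+s), 1/(w0+k)) := by
  intro k
  induction k with
  | zero => intro _; simpa using hbase
  | succ k ih =>
    intro hk
    have hk1 : (k:ℤ) + 1 < c := by exact_mod_cast hk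
    have H := ih (by omega)
    rw [show m + (k+1) = (m+k) + 1 from rfl, Function.iterate_succ_apply', H]
    have hkc : ((c - k : ℤ):ℝ) = (c:ℝ) - k := by push_cast; ring
    have sA := stepA (c - k) s (w0 + k) (by omega) hs0 hs1
      (by have : (0:ℝ) ≤ (k:ℕ) := Nat.cast_nonneg k; linarith)
    rw [hkc] at sA
    rw [sA]
    simp only [Prod.mk.injEq]
    refine ⟨?_, ?_⟩ <;> push_cast <;> ring

/-- The list of digits accumulated in the second coordinate at the start of stage `j`. -/
def Ldig (a : ℕ → ℤ) (b1 : ℤ) (j : ℕ) : List ℤ :=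
  ((List.range (j-1)).map fun i => a (j-i)) ++ [a 1 - 1 + b1]

lemma Ldig_succ (a : ℕ → ℤ) (b1 : ℤ) (j : ℕ) (hj : 1 ≤ j) :
    Ldig a b1 (j+1) = a (j+1) :: Ldig a b1 j := by
  obtain ⟨j', rfl⟩ : ∃ j', j = j' + 1 := ⟨j-1, by omega⟩
  simp only [Ldig, Nat.add_sub_cancel]
  rw [List.range_succ_eq_map, List.map_cons, List.map_map]
  simp only [List.cons_append, Nat.sub_zero]
  congr 2
  apply List.map_congr_left
  intro i hi
  simp only [Function.comp_apply]
  congr 1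
  omega

lemma Ldig_one (a : ℕ → ℤ) (b1 : ℤ) : Ldig a b1 1 = [a 1 - 1 + b1] := by
  simp [Ldig]

lemma Ldig_mem (a : ℕ → ℤ) (b1 : ℤ) (ha : ∀ n : ℕ, 1 ≤ a (n+1)) (hb1 : 1 ≤ b1)
    (j : ℕ) : ∀ d ∈ Ldig a b1 j, 1 ≤ d := by
  intro d hd
  simp only [Ldig, List.mem_append, List.mem_map, List.mem_range,
    List.mem_singleton] at hd
  rcases hd with ⟨i, hi, rfl⟩ | rfl
  · have h2 : j - i = (j - i - 1) + 1 := by omega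
    rw [h2]; exact ha _
  · have h0 : 1 ≤ a 1 := ha 0
    omega

/-- Explicit formula for the iterates of `ℱ` in terms of continued fraction expansions.
Here `x = [0; a_1, a_2, …]` is irrational with tails `t n = [0; a_{n+1}, a_{n+2}, …]`,
and `y = [0; b_1, b_2, …] = 1/(b_1 + y')` with `y' = [0; b_2, b_3, …] ∈ [0,1]`.
For `0 ≤ n < a_1`, `ℱⁿ(x,y) = ([0; a_1 - n, a_2, …], [0; n + b_1, b_2, …])`;
for `n ≥ a_1`, writing `n = a_1 + ⋯ + a_{j} + λ` with `j ≥ 1`, `0 ≤ λ < a_{j+1}`,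
`ℱⁿ(x,y) = ([0; a_{j+1} - λ, a_{j+2}, …], [0; λ+1, a_j, …, a_2, a_1 - 1 + b_1, b_2, …])`. -/
theorem stmt16 (x y : ℝ) (hirr : Irrational x)
    (a : ℕ → ℤ) (t : ℕ → ℝ) (ht0 : t 0 = x)
    (ht : ∀ n : ℕ, 0 < t n ∧ t n < 1 ∧ t n = 1 / (a (n + 1) + t (n + 1)))
    (b1 : ℤ) (y' : ℝ) (hb1 : 1 ≤ b1) (hy'0 : 0 ≤ y') (hy'1 : y' ≤ 1)
    (hy : y = 1 / ((b1 : ℝ) + y')) :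
    (∀ n : ℕ, (n : ℤ) < a 1 →
      Fbar^[n] (x, y) =
        (1 / (((a 1 : ℝ) - n) + t 1), 1 / (((n : ℝ) + (b1 : ℝ)) + y'))) ∧
    (∀ (n j : ℕ) (lam : ℤ), 1 ≤ j → 0 ≤ lam → lam < a (j + 1) →
      (n : ℤ) = (∑ i ∈ Finset.Icc 1 j, a i) + lam →
      Fbar^[n] (x, y) =
        (1 / (((a (j + 1) : ℝ) - (lam : ℝ)) + t (j + 1)),
          cfVal ((lam + 1) ::
            (((List.range (j - 1)).map fun i => a (j - i)) ++ [a 1 - 1 + b1])) y')) := by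
  -- digits are at least 1
  have ha : ∀ n : ℕ, 1 ≤ a (n + 1) := by
    intro n
    obtain ⟨h1, h2, h3⟩ := ht n
    have hpos : (0:ℝ) < (a (n+1) : ℝ) + t (n+1) := by
      rw [h3] at h1
      exact one_div_pos.mp h1
    have hgt1 : (1:ℝ) < (a (n+1):ℝ) + t (n+1) := by
      rw [h3] at h2
      rw [div_lt_one hpos] at h2
      exact h2
    have h4 := (ht (n+1)).2.1
    have h5 : (0:ℝ) < (a (n+1):ℝ) := by linarith
    have h6 : (0:ℤ) < a (n+1) := by exact_mod_cast h5
    omega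
  have hx : x = 1/((a 1:ℝ) + t 1) := by rw [← ht0]; exact (ht 0).2.2
  -- Part 1
  have part1 : ∀ n : ℕ, (n : ℤ) < a 1 →
      Fbar^[n] (x, y) =
        (1 / (((a 1 : ℝ) - n) + t 1), 1 / (((n : ℝ) + (b1 : ℝ)) + y')) := by
    intro n hn
    have hb : Fbar^[0] (x,y) = (1/((a 1:ℝ) + t 1), 1/((b1:ℝ) + y')) := by
      rw [Function.iterate_zero_apply, hx, hy]
    have hb1' : (1:ℝ) ≤ (b1:ℝ) + y' := by
      have : (1:ℝ) ≤ (b1:ℝ) := by exact_mod_cast hb1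
      linarith
    have H := within (x,y) 0 (a 1) (t 1) ((b1:ℝ) + y') (ht 1).1 (ht 1).2.1 hb1' hb n hn
    rw [zero_add] at H
    rw [H]
    simp only [Prod.mk.injEq]
    exact ⟨by norm_num, by ring_nf⟩
  -- nonnegativity of partial sums
  have hsum_nonneg : ∀ j : ℕ, 0 ≤ ∑ i ∈ Finset.Icc 1 j, a i := by
    intro j
    apply Finset.sum_nonneg
    intro i hi
    simp only [Finset.mem_Icc] at hi
    have h2 : i = (i - 1) + 1 := by omega
    rw [h2]
    have := ha (i-1)
    omega
  have hcf : ∀ j : ℕ, 0 ≤ cfVal (Ldig a b1 j) y' ∧ cfVal (Ldig a b1 j) y' ≤ 1 :=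
    fun j => cfVal_mem (Ldig a b1 j) (Ldig_mem a b1 ha hb1 j) y' hy'0 hy'1
  -- Stage starts: at time ∑_{i=1}^j a i the state is (t_j-type, cfVal (1 :: Ldig j))
  have key : ∀ j : ℕ, 1 ≤ j → ∀ m : ℕ, (m:ℤ) = (∑ i ∈ Finset.Icc 1 j, a i) →
      Fbar^[m] (x,y) = (1/((a (j+1):ℝ) + t (j+1)), cfVal (1 :: Ldig a b1 j) y') := by
    intro j hj
    induction j, hj using Nat.le_induction with
    | base =>
      intro m hm
      have hm' : (m:ℤ) = a 1 := by simpa using hm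
      have ha1 : 1 ≤ a 1 := ha 0
      set k := (a 1 - 1).toNat with hkdef
      have hkz : (k:ℤ) = a 1 - 1 := by omega
      have hm1 : m = k + 1 := by omega
      have H := part1 k (by omega)
      rw [hm1, Function.iterate_succ_apply', H]
      have hkR : (k:ℝ) = (a 1:ℝ) - 1 := by
        have : ((k:ℤ):ℝ) = ((a 1 - 1 : ℤ):ℝ) := by rw [hkz]
        push_cast at this
        exact this
      rw [show ((a 1:ℝ) - (k:ℕ)) + t 1 = 1 + t 1 by rw [hkR]; ring]
      rw [stepB (t 1) (1/(((k:ℝ) + (b1:ℝ)) + y')) (ht 1).1 (ht 1).2.1]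
      simp only [Prod.mk.injEq]
      refine ⟨(ht 1).2.2, ?_⟩
      rw [Ldig_one]
      simp only [cfVal]
      push_cast
      rw [hkR]
      try ring_nf
    | succ j hj ihj =>
      intro m hm
      set m0 := (∑ i ∈ Finset.Icc 1 j, a i).toNat with hm0def
      have hm0 : (m0:ℤ) = ∑ i ∈ Finset.Icc 1 j, a i := Int.toNat_of_nonneg (hsum_nonneg j)
      have H0 := ihj m0 hm0
      set w0 := 1 + cfVal (Ldig a b1 j) y' with hw0def
      have hbase : Fbar^[m0] (x,y) = (1/((a (j+1):ℝ) + t (j+1)), 1/w0) := by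
        rw [H0]
        simp only [cfVal, hw0def]
        norm_num
      set k := (a (j+1) - 1).toNat with hkdef
      have haj := ha j
      have hkz : (k:ℤ) = a (j+1) - 1 := by omega
      have hkR : (k:ℝ) = (a (j+1):ℝ) - 1 := by
        have : ((k:ℤ):ℝ) = ((a (j+1) - 1 : ℤ):ℝ) := by rw [hkz]
        push_cast at this
        exact this
      have hw0' : 1 ≤ w0 := by
        have := (hcf j).1
        rw [hw0def]
        linarith
      have H1 := within (x,y) m0 (a (j+1)) (t (j+1)) w0 (ht (j+1)).1 (ht (j+1)).2.1
        hw0' hbase k (by omega)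
      have hsum : (∑ i ∈ Finset.Icc 1 (j+1), a i) = (∑ i ∈ Finset.Icc 1 j, a i) + a (j+1) :=
        Finset.sum_Icc_succ_top (by omega) a
      have hm' : (m:ℤ) = (m0:ℤ) + a (j+1) := by rw [hm, hsum, hm0]
      have hmeq : m = m0 + k + 1 := by omega
      rw [hmeq, Function.iterate_succ_apply', H1]
      rw [show ((a (j+1):ℝ) - (k:ℕ)) + t (j+1) = 1 + t (j+1) by rw [hkR]; ring]
      rw [stepB (t (j+1)) (1/(w0 + (k:ℝ))) (ht (j+1)).1 (ht (j+1)).2.1]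
      simp only [Prod.mk.injEq]
      refine ⟨(ht (j+1)).2.2, ?_⟩
      rw [Ldig_succ a b1 j hj]
      simp only [cfVal]
      push_cast
      rw [hkR, hw0def]
      ring_nf
  refine ⟨part1, ?_⟩
  intro n j lam hj hlam0 hlam1 hn
  show Fbar^[n] (x, y) =
    (1 / (((a (j + 1) : ℝ) - (lam : ℝ)) + t (j + 1)),
      cfVal ((lam + 1) :: Ldig a b1 j) y')
  set m0 := (∑ i ∈ Finset.Icc 1 j, a i).toNat with hm0def
  have hm0 : (m0:ℤ) = ∑ i ∈ Finset.Icc 1 j, a i := Int.toNat_of_nonneg (hsum_nonneg j)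
  have H0 := key j hj m0 hm0
  set w0 := 1 + cfVal (Ldig a b1 j) y' with hw0def
  have hbase : Fbar^[m0] (x,y) = (1/((a (j+1):ℝ) + t (j+1)), 1/w0) := by
    rw [H0]
    simp only [cfVal, hw0def]
    norm_num
  set k := lam.toNat with hkdef
  have hkz : (k:ℤ) = lam := Int.toNat_of_nonneg hlam0
  have hkR : (k:ℝ) = (lam:ℝ) := by
    have : ((k:ℤ):ℝ) = ((lam:ℤ):ℝ) := by rw [hkz]
    push_cast at this
    exact this
  have hw0' : 1 ≤ w0 := by
    have := (hcf j).1
    rw [hw0def]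
    linarith
  have H1 := within (x,y) m0 (a (j+1)) (t (j+1)) w0 (ht (j+1)).1 (ht (j+1)).2.1
    hw0' hbase k (by omega)
  have hneq : n = m0 + k := by omega
  rw [hneq, H1]
  simp only [Prod.mk.injEq, cfVal]
  constructor
  · rw [hkR]
  · push_cast
    rw [hkR, hw0def]
    ring_nf

end
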